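/- Let E be an equivalence relation on (2^ℕ)^ℕ extending E₀^ℕ and invariant under the action of G = (⊕ℤ₂)^ℕ. Suppose for some k, for comeager many (x,y,z) ∈ (2^ℕ)^k × (2^ℕ)^{ℕ∖k} × (2^ℕ)^{ℕ∖k} one has (x,y) E (x,z). Then E extends E₀^k on a comeager subset of (2^ℕ)^ℕ, i.e. there is a comeager C with: for u,v ∈ C, u↾k E₀^k v↾k implies u E v. -/

import Mathlib

/-- Eventual equality on Cantor space `2^ℕ`. -/
def E0 (x y : ℕ → Bool) : Prop := ∃ N, ∀ n ≥ N, x n = y n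

/-- Gluing `(2^ℕ)^k × (2^ℕ)^{ℕ∖k} ≅ (2^ℕ)^ℕ` (identifying `ℕ∖k` with `ℕ`). -/
def glue (k : ℕ) (x : Fin k → ℕ → Bool) (y : ℕ → ℕ → Bool) : ℕ → ℕ → Bool :=
  fun n => if h : n < k then x ⟨n, h⟩ else y (n - k)

open Set TopologicalSpace Filter

/-- Slices of an open dense set are dense, for comeager many base points. -/
lemma ku_open_dense {α β : Type*} [TopologicalSpace α] [TopologicalSpace β]
    [SecondCountableTopology β] {U : Set (α × β)} (hUo : IsOpen U) (hUd : Dense U) :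
    {a | Dense {b | (a, b) ∈ U}} ∈ residual α := by
  have h : (⋂ V ∈ countableBasis β, {a | ∃ b ∈ V, (a, b) ∈ U}) ∈ residual α := by
    refine (countable_bInter_mem (countable_countableBasis β)).2 fun V hV => ?_
    have hVo : IsOpen V := (isBasis_countableBasis β).isOpen hV
    have hVne : V.Nonempty := by
      rcases eq_empty_or_nonempty V with rfl | h
      · exact absurd hV (empty_notMem_countableBasis β)
      · exact h
    refine residual_of_dense_open ?_ ?_
    · have : {a | ∃ b ∈ V, (a, b) ∈ U} = Prod.fst '' (U ∩ univ ×ˢ V) := by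
        ext a
        constructor
        · rintro ⟨b, hbV, hbU⟩
          exact ⟨(a, b), ⟨hbU, mem_univ _, hbV⟩, rfl⟩
        · rintro ⟨⟨a', b⟩, ⟨hbU, _, hbV⟩, rfl⟩
          exact ⟨b, hbV, hbU⟩
      rw [this]
      exact isOpenMap_fst _ (hUo.inter (isOpen_univ.prod hVo))
    · rw [dense_iff_inter_open]
      intro W hWo hWne
      obtain ⟨w, hw⟩ := hWne
      obtain ⟨⟨a, b⟩, ⟨ha, hb⟩, hU⟩ := hUd.inter_open_nonempty (W ×ˢ V)
        (hWo.prod hVo) ⟨(w, hVne.choose), hw, hVne.choose_spec⟩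
      exact ⟨a, ha, b, hb, hU⟩
  filter_upwards [h] with a ha
  rw [(isBasis_countableBasis β).dense_iff]
  intro V hV _
  obtain ⟨b, hbV, hbU⟩ := (mem_iInter₂.1 ha) V hV
  exact ⟨b, hbV, hbU⟩

/-- One direction of the Kuratowski–Ulam theorem: if a set is comeager in a product
then comeager many of its vertical slices are comeager. -/
lemma ku {α β : Type*} [TopologicalSpace α] [TopologicalSpace β]
    [SecondCountableTopology β] {S : Set (α × β)} (hS : S ∈ residual (α × β)) :
    {a | {b | (a, b) ∈ S} ∈ residual β} ∈ residual α := by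
  obtain ⟨T, To, Td, Tct, Tsub⟩ := mem_residual_iff.1 hS
  have key : (⋂ U ∈ T, {a | Dense {b | (a, b) ∈ U}}) ∈ residual α :=
    (countable_bInter_mem Tct).2 fun U hU => ku_open_dense (To U hU) (Td U hU)
  filter_upwards [key] with a ha
  rw [mem_residual_iff]
  refine ⟨(fun U => {b | (a, b) ∈ U}) '' T, ?_, ?_, Tct.image _, ?_⟩
  · rintro t ⟨U, hU, rfl⟩
    exact (To U hU).preimage (Continuous.prodMk_right a)
  · rintro t ⟨U, hU, rfl⟩
    exact (mem_iInter₂.1 ha) U hU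
  · intro b hb
    refine Tsub fun U hU => ?_
    exact hb _ ⟨U, hU, rfl⟩

/-- The gluing homeomorphism `(2^ℕ)^k × (2^ℕ)^ℕ ≃ₜ (2^ℕ)^ℕ`. -/
def glueHomeo (k : ℕ) : ((Fin k → ℕ → Bool) × (ℕ → ℕ → Bool)) ≃ₜ (ℕ → ℕ → Bool) where
  toFun p := glue k p.1 p.2
  invFun u := (fun i => u i, fun n => u (n + k))
  left_inv p := by
    obtain ⟨x, y⟩ := p
    refine Prod.ext ?_ ?_
    · funext i
      simp only [glue]
      rw [dif_pos i.isLt]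
    · funext n
      simp only [glue]
      rw [dif_neg (by omega : ¬ n + k < k), Nat.add_sub_cancel]
  right_inv u := by
    funext n
    simp only [glue]
    split_ifs with h
    · rfl
    · rw [Nat.sub_add_cancel (Nat.le_of_not_lt h)]
  continuous_toFun := by
    refine continuous_pi fun n => ?_
    by_cases h : n < k
    · have : (fun p : (Fin k → ℕ → Bool) × (ℕ → ℕ → Bool) => glue k p.1 p.2 n)
          = fun p => p.1 ⟨n, h⟩ := by
        funext p; simp [glue, h]
      rw [this]
      exact (continuous_apply _).comp continuous_fst
    · have : (fun p : (Fin k → ℕ → Bool) × (ℕ → ℕ → Bool) => glue k p.1 p.2 n)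
          = fun p => p.2 (n - k) := by
        funext p; simp [glue, h]
      rw [this]
      exact (continuous_apply _).comp continuous_snd
  continuous_invFun := by
    refine Continuous.prodMk ?_ ?_
    · exact continuous_pi fun i => continuous_apply _
    · exact continuous_pi fun n => continuous_apply _

/-- If `E` is an equivalence relation on `(2^ℕ)^ℕ` extending `E₀^ℕ`, invariant under the
coordinatewise finite-flip action of `(⊕ℤ₂)^ℕ`, and for some `k`, for comeager many
`(x,y,z) ∈ (2^ℕ)^k × (2^ℕ)^{ℕ∖k} × (2^ℕ)^{ℕ∖k}` one has `(x,y) E (x,z)`, then `E` extends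
`E₀^k` on a comeager set. -/
theorem extends_E0k_on_comeager (E : (ℕ → ℕ → Bool) → (ℕ → ℕ → Bool) → Prop)
    (hEquiv : Equivalence E)
    (hExt : ∀ x y : ℕ → ℕ → Bool, (∀ n, E0 (x n) (y n)) → E x y)
    (hInv : ∀ g : ℕ → ℕ → Bool, (∀ n, {i | g n i = true}.Finite) →
      ∀ x y : ℕ → ℕ → Bool, E x y →
        E (fun n i => xor (g n i) (x n i)) (fun n i => xor (g n i) (y n i)))
    (k : ℕ)
    (hComeager :
      {p : (Fin k → ℕ → Bool) × (ℕ → ℕ → Bool) × (ℕ → ℕ → Bool) |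
        E (glue k p.1 p.2.1) (glue k p.1 p.2.2)} ∈
        residual ((Fin k → ℕ → Bool) × (ℕ → ℕ → Bool) × (ℕ → ℕ → Bool))) :
    ∃ C ∈ residual (ℕ → ℕ → Bool), ∀ u ∈ C, ∀ v ∈ C,
      (∀ i < k, E0 (u i) (v i)) → E u v := by
  -- reassociate the product: view the comeager set inside ((2^ℕ)^k × (2^ℕ)^ℕ) × (2^ℕ)^ℕ
  have hS'mem : {q : ((Fin k → ℕ → Bool) × (ℕ → ℕ → Bool)) × (ℕ → ℕ → Bool) |
      E (glue k q.1.1 q.1.2) (glue k q.1.1 q.2)} ∈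
      residual (((Fin k → ℕ → Bool) × (ℕ → ℕ → Bool)) × (ℕ → ℕ → Bool)) := by
    rw [← (Homeomorph.prodAssoc (Fin k → ℕ → Bool) (ℕ → ℕ → Bool)
      (ℕ → ℕ → Bool)).symm.residual_map_eq, Filter.mem_map]
    exact hComeager
  -- Kuratowski–Ulam: comeager many (x, y) have comeager slice
  have hT : {q : (Fin k → ℕ → Bool) × (ℕ → ℕ → Bool) |
      {z : ℕ → ℕ → Bool | E (glue k q.1 q.2) (glue k q.1 z)} ∈ residual (ℕ → ℕ → Bool)}
      ∈ residual ((Fin k → ℕ → Bool) × (ℕ → ℕ → Bool)) := ku hS'mem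
  -- pull back along the gluing homeomorphism
  refine ⟨(glueHomeo k).symm ⁻¹' {q : (Fin k → ℕ → Bool) × (ℕ → ℕ → Bool) |
      {z : ℕ → ℕ → Bool | E (glue k q.1 q.2) (glue k q.1 z)} ∈ residual (ℕ → ℕ → Bool)},
      ?_, ?_⟩
  · rw [← (glueHomeo k).symm.residual_map_eq, Filter.mem_map] at hT
    exact hT
  · intro u hu v hv huv
    simp only [mem_preimage, mem_setOf_eq] at hu hv
    have hgu : glue k ((glueHomeo k).symm u).1 ((glueHomeo k).symm u).2 = u :=
      (glueHomeo k).apply_symm_apply u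
    have hgv : glue k ((glueHomeo k).symm v).1 ((glueHomeo k).symm v).2 = v :=
      (glueHomeo k).apply_symm_apply v
    rw [hgu] at hu
    rw [hgv] at hv
    have hne : ({z : ℕ → ℕ → Bool | E u (glue k ((glueHomeo k).symm u).1 z)} ∩
        {z : ℕ → ℕ → Bool | E v (glue k ((glueHomeo k).symm v).1 z)}).Nonempty :=
      (dense_of_mem_residual (inter_mem hu hv)).nonempty
    obtain ⟨z, hz1, hz2⟩ := hne
    have hmid : E (glue k ((glueHomeo k).symm u).1 z) (glue k ((glueHomeo k).symm v).1 z) := by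
      refine hExt _ _ fun n => ?_
      by_cases h : n < k
      · simp only [glue, dif_pos h]
        exact huv n h
      · simp only [glue, dif_neg h]
        exact ⟨0, fun _ _ => rfl⟩
    exact hEquiv.trans hz1 (hEquiv.trans hmid (hEquiv.symm hz2))
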